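/- arXiv:2605.22990 — 2 statements merged into one kernel-verified Lean document; each statement's English description precedes it below -/
import Mathlib

section
/- The kernelized drifting field is SE(3)-equivariant: for every g = (R, t) ∈ SE(3) acting atom-wise on configurations, all p, q ∈ P(M), and every X ∈ M, V_{g♯p, g♯q}(g·X) = R · V_{p,q}(X), where V_{p,q}(X) = V_p(X) − V_q(X) with V_μ(X) = (1/Z_μ(X)) ∫_M k(X,Y)(Y − X) dμ(Y), and R acts atom-wise (block-diagonally) without translation on the displacement vector. -/
/-!
STATEMENT 6: The kernelized drifting field `V_{p,q}(X) = V_p(X) − V_q(X)` is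
SE(3)-equivariant: for every `g = (R, t) ∈ SE(3)` acting atom-wise on
configurations, all `p, q ∈ P(M)`, and every `X ∈ M`,
`V_{g♯p, g♯q}(g·X) = R · V_{p,q}(X)`, where `R` acts atom-wise
(block-diagonally) without translation on the displacement vector.
-/

open MeasureTheory Matrix

noncomputable section

/-- The molecular configuration space `M = ℝ^{3N}` for `N` atoms, with the
Euclidean norm (coordinates indexed by atom `n` and spatial axis `i`). -/
abbrev Conf (N : ℕ) := EuclideanSpace ℝ (Fin N × Fin 3)

/-- Membership in `P(M)`: Borel probability measures absolutely continuous with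
respect to Lebesgue measure. -/
def IsProbAC {N : ℕ} (μ : Measure (Conf N)) : Prop :=
  IsProbabilityMeasure μ ∧ μ ≪ volume

/-- The exponential kernel `k(X,Y) = exp(−‖X−Y‖/τ)`. -/
def kern {N : ℕ} (τ : ℝ) (X Y : Conf N) : ℝ := Real.exp (-‖X - Y‖ / τ)

/-- The partition function `Z_μ(X) = ∫ k(X,Y) dμ(Y)`. -/
def Zpart {N : ℕ} (τ : ℝ) (μ : Measure (Conf N)) (X : Conf N) : ℝ :=
  ∫ Y, kern τ X Y ∂μ

/-- The kernel-weighted mean-shift vector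
`V_μ(X) = (1/Z_μ(X)) ∫ k(X,Y)(Y − X) dμ(Y)`. -/
def meanShift {N : ℕ} (τ : ℝ) (μ : Measure (Conf N)) (X : Conf N) : Conf N :=
  (Zpart τ μ X)⁻¹ • ∫ Y, kern τ X Y • (Y - X) ∂μ

/-- The kernelized drifting field `V_{p,q}(X) = V_p(X) − V_q(X)`. -/
def drift {N : ℕ} (τ : ℝ) (p q : Measure (Conf N)) (X : Conf N) : Conf N :=
  meanShift τ p X - meanShift τ q X

/-- Atom-wise rigid motion: `(g·X)⁽ⁿ⁾ = R x⁽ⁿ⁾ + t` for `g = (R, t)`. -/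
def act {N : ℕ} (R : Matrix (Fin 3) (Fin 3) ℝ) (t : Fin 3 → ℝ) (X : Conf N) : Conf N :=
  WithLp.toLp 2 (fun p : Fin N × Fin 3 => (∑ j, R p.2 j * X (p.1, j)) + t p.2)

/-- Atom-wise (block-diagonal) rotation without translation, acting on
displacement vectors. -/
def rotOnly {N : ℕ} (R : Matrix (Fin 3) (Fin 3) ℝ) (v : Conf N) : Conf N :=
  WithLp.toLp 2 (fun p : Fin N × Fin 3 => ∑ j, R p.2 j * v (p.1, j))

lemma rotOnly_eq_mulVec {N : ℕ} (R : Matrix (Fin 3) (Fin 3) ℝ) (v : Conf N) (p : Fin N × Fin 3) :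
    rotOnly R v p = R.mulVec (fun j => v (p.1, j)) p.2 := rfl
def rotL (N : ℕ) (R : Matrix (Fin 3) (Fin 3) ℝ) : Conf N →ₗ[ℝ] Conf N where
  toFun := rotOnly R
  map_add' v w := by
    ext p
    simp [rotOnly, mul_add, Finset.sum_add_distrib]
  map_smul' c v := by
    ext p
    simp [rotOnly, Finset.mul_sum, mul_left_comm]
lemma rotOnly_comp {N : ℕ} (A B : Matrix (Fin 3) (Fin 3) ℝ) (v : Conf N) :
    rotOnly A (rotOnly B v) = rotOnly (A * B) v := by
  ext p
  simp only [rotOnly, Matrix.mul_apply, Finset.mul_sum, Finset.sum_mul, mul_assoc]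
  rw [Finset.sum_comm]
lemma rotOnly_one {N : ℕ} (v : Conf N) : rotOnly (N := N) 1 v = v := by
  ext p
  simp [rotOnly_eq_mulVec]
lemma transpose_eq_star (R : Matrix (Fin 3) (Fin 3) ℝ) : Rᵀ = star R := by
  ext i j
  simp [Matrix.star_apply]
lemma rot_inv {N : ℕ} {R : Matrix (Fin 3) (Fin 3) ℝ}
    (hR : R ∈ Matrix.orthogonalGroup (Fin 3) ℝ) (v : Conf N) :
    rotOnly Rᵀ (rotOnly R v) = v := by
  rw [rotOnly_comp, transpose_eq_star, hR.1, rotOnly_one]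
lemma rot_inv' {N : ℕ} {R : Matrix (Fin 3) (Fin 3) ℝ}
    (hR : R ∈ Matrix.orthogonalGroup (Fin 3) ℝ) (v : Conf N) :
    rotOnly R (rotOnly Rᵀ v) = v := by
  rw [rotOnly_comp, transpose_eq_star, hR.2, rotOnly_one]
/-- The rotation as a continuous linear equivalence. -/
def rotE (N : ℕ) {R : Matrix (Fin 3) (Fin 3) ℝ}
    (hR : R ∈ Matrix.orthogonalGroup (Fin 3) ℝ) : Conf N ≃L[ℝ] Conf N :=
  (LinearEquiv.ofLinear (rotL N R) (rotL N Rᵀ)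
    (LinearMap.ext fun v => rot_inv' hR v)
    (LinearMap.ext fun v => rot_inv hR v)).toContinuousLinearEquiv
lemma rotE_apply {N : ℕ} {R : Matrix (Fin 3) (Fin 3) ℝ}
    (hR : R ∈ Matrix.orthogonalGroup (Fin 3) ℝ) (v : Conf N) :
    rotE N hR v = rotOnly R v := rfl
lemma norm_rotOnly {N : ℕ} {R : Matrix (Fin 3) (Fin 3) ℝ}
    (hR : R ∈ Matrix.orthogonalGroup (Fin 3) ℝ) (v : Conf N) :
    ‖rotOnly R v‖ = ‖v‖ := by
  have hRtR : Rᵀ * R = 1 := by rw [transpose_eq_star]; exact hR.1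
  have key : ∀ w : Fin 3 → ℝ, ∑ i, (R.mulVec w i) ^ 2 = ∑ j, (w j) ^ 2 := by
    intro w
    have h1 : (R.mulVec w) ⬝ᵥ (R.mulVec w) = w ⬝ᵥ w := by
      rw [Matrix.dotProduct_mulVec, ← Matrix.mulVec_transpose, Matrix.mulVec_mulVec, hRtR,
        Matrix.one_mulVec]
    simpa [dotProduct, sq] using h1
  rw [EuclideanSpace.norm_eq, EuclideanSpace.norm_eq]
  congr 1
  rw [Fintype.sum_prod_type, Fintype.sum_prod_type]
  refine Finset.sum_congr rfl fun n _ => ?_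
  simpa [Real.norm_eq_abs, sq_abs, rotOnly_eq_mulVec] using key (fun j => v (n, j))
lemma act_sub {N : ℕ} (R : Matrix (Fin 3) (Fin 3) ℝ) (t : Fin 3 → ℝ) (X Y : Conf N) :
    act R t X - act R t Y = rotOnly R (X - Y) := by
  ext p
  simp [act, rotOnly, mul_sub, Finset.sum_sub_distrib]
lemma kern_act {N : ℕ} (τ : ℝ) {R : Matrix (Fin 3) (Fin 3) ℝ}
    (hR : R ∈ Matrix.orthogonalGroup (Fin 3) ℝ) (t : Fin 3 → ℝ) (X Y : Conf N) :
    kern τ (act R t X) (act R t Y) = kern τ X Y := by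
  rw [kern, act_sub, norm_rotOnly hR, kern]
lemma continuous_act {N : ℕ} (R : Matrix (Fin 3) (Fin 3) ℝ) (t : Fin 3 → ℝ) :
    Continuous (act (N := N) R t) := by
  have h : act (N := N) R t = fun X => rotL N R X + act R t 0 := by
    funext X
    ext p
    simp [act, rotL, rotOnly]
  rw [h]
  exact ((rotL N R).continuous_of_finiteDimensional).add continuous_const
lemma continuous_kern {N : ℕ} (τ : ℝ) (X : Conf N) : Continuous fun Y => kern τ X Y :=
  Real.continuous_exp.comp (((continuous_const.sub continuous_id).norm.neg).div_const τ)
lemma meanShift_map {N : ℕ} (τ : ℝ) {R : Matrix (Fin 3) (Fin 3) ℝ}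
    (hR : R ∈ Matrix.orthogonalGroup (Fin 3) ℝ) (t : Fin 3 → ℝ)
    (μ : Measure (Conf N)) (X : Conf N) :
    meanShift τ (μ.map (act R t)) (act R t X) = rotOnly R (meanShift τ μ X) := by
  set g := act R t with hgdef
  have hg : AEMeasurable g μ := (continuous_act R t).measurable.aemeasurable
  have hZ : Zpart τ (μ.map g) (g X) = Zpart τ μ X := by
    rw [Zpart, integral_map hg (continuous_kern τ (g X)).aestronglyMeasurable]
    simp only [hgdef, kern_act τ hR t]
    rfl
  have hI : (∫ Y, kern τ (g X) Y • (Y - g X) ∂(μ.map g))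
      = rotE N hR (∫ Y, kern τ X Y • (Y - X) ∂μ) := by
    rw [integral_map (f := fun Y => kern τ (g X) Y • (Y - g X)) hg
      (Continuous.aestronglyMeasurable
        ((continuous_kern τ (g X)).smul (by fun_prop)))]
    have hfun : ∀ Y, kern τ (g X) (g Y) • (g Y - g X) = rotE N hR (kern τ X Y • (Y - X)) := by
      intro Y
      rw [hgdef, kern_act τ hR t, act_sub, ← rotE_apply hR, ← _root_.map_smul]
    rw [show (fun Y => kern τ (g X) (g Y) • (g Y - g X))
        = fun Y => rotE N hR (kern τ X Y • (Y - X)) from funext hfun]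
    exact ContinuousLinearEquiv.integral_comp_comm _ _
  rw [meanShift, hZ, hI, ← _root_.map_smul, rotE_apply]
  rfl
theorem drift_equiv {N : ℕ} (τ : ℝ) {R : Matrix (Fin 3) (Fin 3) ℝ}
    (hR : R ∈ Matrix.orthogonalGroup (Fin 3) ℝ) (t : Fin 3 → ℝ)
    (p q : Measure (Conf N)) (X : Conf N) :
    (meanShift τ (p.map (act R t)) (act R t X) - meanShift τ (q.map (act R t)) (act R t X))
      = rotOnly R (meanShift τ p X - meanShift τ q X) := by
  rw [meanShift_map τ hR t p X, meanShift_map τ hR t q X, ← rotE_apply hR, ← rotE_apply hR,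
    ← rotE_apply hR, ← map_sub]


/-- SE(3)-equivariance of the kernelized drifting field. -/
theorem drift_SE3_equivariant {N : ℕ} (τ : ℝ) (hτ : 0 < τ)
    (R : Matrix (Fin 3) (Fin 3) ℝ)
    (hR : R ∈ Matrix.orthogonalGroup (Fin 3) ℝ) (hdet : R.det = 1)
    (t : Fin 3 → ℝ) (p q : Measure (Conf N)) (hp : IsProbAC p) (hq : IsProbAC q)
    (X : Conf N) :
    drift τ (p.map (act R t)) (q.map (act R t)) (act R t X)
      = rotOnly R (drift τ p q X) := by
  exact drift_equiv τ hR t p q X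

end
end

section
/- The Kabsch alignment objective transforms by conjugation under a joint rigid motion: for point clouds X, Y ∈ (ℝ³)^M with centroids X̄, Ȳ, define the objective f_{X,Y}(S) = ‖S(X − X̄) + Ȳ − Y‖ for S ∈ SO(3), where S acts point-wise and centroids are broadcast. Then for every g = (R, t) ∈ SE(3) acting point-wise on both X and Y, and every S ∈ SO(3), f_{g·X, g·Y}(R S Rᵀ) = f_{X,Y}(S). Consequently, S₀ ∈ SO(3) minimizes f_{X,Y} over SO(3) if and only if R S₀ Rᵀ minimizes f_{g·X, g·Y} over SO(3). -/
/-!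
STATEMENT 10: The Kabsch alignment objective
`f_{X,Y}(S) = ‖S(X − X̄) + Ȳ − Y‖` (for `S ∈ SO(3)`, acting point-wise, with
centroids broadcast) transforms by conjugation under a joint rigid motion:
for every `g = (R, t) ∈ SE(3)` acting point-wise on both `X` and `Y`, and
every `S ∈ SO(3)`, `f_{g·X, g·Y}(R S Rᵀ) = f_{X,Y}(S)`. Consequently,
`S₀ ∈ SO(3)` minimizes `f_{X,Y}` over SO(3) iff `R S₀ Rᵀ` minimizes
`f_{g·X, g·Y}` over SO(3).
-/

open Matrix

noncomputable section

/-- 3-dimensional Euclidean space. -/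
abbrev E3 := EuclideanSpace ℝ (Fin 3)

/-- The special orthogonal group SO(3) as a set of 3×3 real matrices. -/
def SO3 : Set (Matrix (Fin 3) (Fin 3) ℝ) :=
  {S | S ∈ Matrix.orthogonalGroup (Fin 3) ℝ ∧ S.det = 1}

/-- The centroid of a point cloud: the mean of its `M` points. -/
def centroid {M : ℕ} (X : Fin M → E3) : E3 := (M : ℝ)⁻¹ • ∑ m, X m

/-- The Euclidean norm on point clouds `(ℝ³)^M`. -/
def cloudNorm {M : ℕ} (v : Fin M → E3) : ℝ := Real.sqrt (∑ m, ‖v m‖ ^ 2)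

/-- Point-wise rigid motion `(g·X)⁽ᵐ⁾ = R X⁽ᵐ⁾ + t`. -/
def pactc {M : ℕ} (R : Matrix (Fin 3) (Fin 3) ℝ) (t : E3) (X : Fin M → E3) :
    Fin M → E3 :=
  fun m => Matrix.toEuclideanLin R (X m) + t

/-- The Kabsch alignment objective `f_{X,Y}(S) = ‖S(X − X̄) + Ȳ − Y‖`,
where `S` acts point-wise and centroids are broadcast. -/
def kabschObj {M : ℕ} (X Y : Fin M → E3) (S : Matrix (Fin 3) (Fin 3) ℝ) : ℝ :=
  cloudNorm (fun m => Matrix.toEuclideanLin S (X m - centroid X) + centroid Y - Y m)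

lemma toEuclideanLin_mul_apply' (A B : Matrix (Fin 3) (Fin 3) ℝ) (v : E3) :
    Matrix.toEuclideanLin (A * B) v = Matrix.toEuclideanLin A (Matrix.toEuclideanLin B v) := by
  simp [Matrix.toEuclideanLin_apply, Matrix.mulVec_mulVec]

lemma orth_mul' (R : Matrix (Fin 3) (Fin 3) ℝ) (hR : R ∈ Matrix.orthogonalGroup (Fin 3) ℝ) :
    Rᵀ * R = 1 ∧ R * Rᵀ = 1 := by
  have h := (Unitary.mem_iff).mp hR
  rwa [Matrix.star_eq_conjTranspose, Matrix.conjTranspose_eq_transpose_of_trivial] at h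

lemma norm_toEuclideanLin' (R : Matrix (Fin 3) (Fin 3) ℝ)
    (hR : R ∈ Matrix.orthogonalGroup (Fin 3) ℝ) (v : E3) :
    ‖Matrix.toEuclideanLin R v‖ = ‖v‖ := by
  have h1 : Matrix.toEuclideanLin Rᵀ (Matrix.toEuclideanLin R v) = v := by
    rw [← toEuclideanLin_mul_apply', (orth_mul' R hR).1]
    simp [Matrix.toEuclideanLin_apply, Matrix.one_mulVec]
  have hadj : Matrix.toEuclideanLin Rᵀ
      = LinearMap.adjoint (Matrix.toEuclideanLin R) := by
    rw [← Matrix.toEuclideanLin_conjTranspose_eq_adjoint,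
      Matrix.conjTranspose_eq_transpose_of_trivial]
  have h2 : (inner ℝ (Matrix.toEuclideanLin R v) (Matrix.toEuclideanLin R v) : ℝ)
      = inner ℝ v v := by
    rw [← LinearMap.adjoint_inner_right, ← hadj, h1]
  calc ‖Matrix.toEuclideanLin R v‖
      = Real.sqrt (‖Matrix.toEuclideanLin R v‖ ^ 2) := (Real.sqrt_sq (norm_nonneg _)).symm
    _ = Real.sqrt (‖v‖ ^ 2) := by
        rw [← real_inner_self_eq_norm_sq, ← real_inner_self_eq_norm_sq, h2]
    _ = ‖v‖ := Real.sqrt_sq (norm_nonneg _)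

lemma centroid_pactc {M : ℕ} (hM : M ≠ 0) (R : Matrix (Fin 3) (Fin 3) ℝ) (t : E3)
    (X : Fin M → E3) :
    centroid (pactc R t X) = Matrix.toEuclideanLin R (centroid X) + t := by
  have hMR : (M : ℝ) ≠ 0 := Nat.cast_ne_zero.mpr hM
  unfold centroid pactc
  rw [Finset.sum_add_distrib, Finset.sum_const, Finset.card_univ, Fintype.card_fin,
    smul_add, ← map_sum, ← _root_.map_smul, ← Nat.cast_smul_eq_nsmul ℝ, smul_smul,
    inv_mul_cancel₀ hMR, one_smul]

lemma kabschObj_pactc {M : ℕ}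
    (R : Matrix (Fin 3) (Fin 3) ℝ)
    (hR : R ∈ Matrix.orthogonalGroup (Fin 3) ℝ)
    (t : E3) (X Y : Fin M → E3) (S : Matrix (Fin 3) (Fin 3) ℝ) :
    kabschObj (pactc R t X) (pactc R t Y) (R * S * Rᵀ) = kabschObj X Y S := by
  rcases Nat.eq_zero_or_pos M with hM | hM
  · subst hM; simp [kabschObj, cloudNorm]
  have hM' : M ≠ 0 := hM.ne'
  unfold kabschObj cloudNorm
  congr 1
  apply Finset.sum_congr rfl
  intro m _
  have key : Matrix.toEuclideanLin (R * S * Rᵀ)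
        (pactc R t X m - centroid (pactc R t X)) + centroid (pactc R t Y) - pactc R t Y m
      = Matrix.toEuclideanLin R
        (Matrix.toEuclideanLin S (X m - centroid X) + centroid Y - Y m) := by
    rw [centroid_pactc hM' R t X, centroid_pactc hM' R t Y]
    simp only [pactc]
    have h1 : Matrix.toEuclideanLin R (X m) + t - (Matrix.toEuclideanLin R (centroid X) + t)
        = Matrix.toEuclideanLin R (X m - centroid X) := by
      rw [map_sub]; abel
    rw [h1, ← toEuclideanLin_mul_apply']
    have h2 : R * S * Rᵀ * R = R * S := by
      rw [mul_assoc, (orth_mul' R hR).1, mul_one]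
    rw [h2, toEuclideanLin_mul_apply', map_sub (Matrix.toEuclideanLin R), map_add]
    abel
  dsimp only
  rw [key, norm_toEuclideanLin' R hR]

/-- The Kabsch objective transforms by conjugation under a joint rigid motion,
and minimizers correspond by conjugation. -/
theorem kabschObj_conjugation {M : ℕ}
    (R : Matrix (Fin 3) (Fin 3) ℝ)
    (hR : R ∈ Matrix.orthogonalGroup (Fin 3) ℝ) (hdet : R.det = 1)
    (t : E3) (X Y : Fin M → E3) :
    (∀ S ∈ SO3, kabschObj (pactc R t X) (pactc R t Y) (R * S * Rᵀ)
        = kabschObj X Y S) ∧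
    (∀ S₀ ∈ SO3,
      ((∀ S ∈ SO3, kabschObj X Y S₀ ≤ kabschObj X Y S) ↔
        (∀ S ∈ SO3, kabschObj (pactc R t X) (pactc R t Y) (R * S₀ * Rᵀ)
            ≤ kabschObj (pactc R t X) (pactc R t Y) S))) := by
  have hRt : Rᵀ ∈ Matrix.orthogonalGroup (Fin 3) ℝ := by
    have := Unitary.star_mem hR
    rwa [Matrix.star_eq_conjTranspose, Matrix.conjTranspose_eq_transpose_of_trivial] at this
  have hconjmem : ∀ A B S : Matrix (Fin 3) (Fin 3) ℝ,
      A ∈ Matrix.orthogonalGroup (Fin 3) ℝ → A.det = 1 →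
      B ∈ Matrix.orthogonalGroup (Fin 3) ℝ → B.det = 1 →
      S ∈ SO3 → A * S * B ∈ SO3 := by
    intro A B S hA hAd hB hBd hS
    refine ⟨mul_mem (mul_mem hA hS.1) hB, ?_⟩
    rw [Matrix.det_mul, Matrix.det_mul, hAd, hS.2, hBd]; norm_num
  have hdetT : Rᵀ.det = 1 := by rw [Matrix.det_transpose]; exact hdet
  constructor
  · intro S _; exact kabschObj_pactc R hR t X Y S
  · intro S₀ hS₀
    constructor
    · intro hmin S hS
      have hS' : Rᵀ * S * R ∈ SO3 := hconjmem Rᵀ R S hRt hdetT hR hdet hS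
      have hback : R * (Rᵀ * S * R) * Rᵀ = S := by
        have h : R * (Rᵀ * S * R) * Rᵀ = (R * Rᵀ) * S * (R * Rᵀ) := by
          simp only [mul_assoc]
        rw [h, (orth_mul' R hR).2, one_mul, mul_one]
      calc kabschObj (pactc R t X) (pactc R t Y) (R * S₀ * Rᵀ)
          = kabschObj X Y S₀ := kabschObj_pactc R hR t X Y S₀
        _ ≤ kabschObj X Y (Rᵀ * S * R) := hmin _ hS'
        _ = kabschObj (pactc R t X) (pactc R t Y) (R * (Rᵀ * S * R) * Rᵀ) :=
            (kabschObj_pactc R hR t X Y _).symm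
        _ = kabschObj (pactc R t X) (pactc R t Y) S := by rw [hback]
    · intro hmin S hS
      have hS' : R * S * Rᵀ ∈ SO3 := hconjmem R Rᵀ S hR hdet hRt hdetT hS
      calc kabschObj X Y S₀
          = kabschObj (pactc R t X) (pactc R t Y) (R * S₀ * Rᵀ) :=
            (kabschObj_pactc R hR t X Y S₀).symm
        _ ≤ kabschObj (pactc R t X) (pactc R t Y) (R * S * Rᵀ) := hmin _ hS'
        _ = kabschObj X Y S := kabschObj_pactc R hR t X Y S

end
end
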